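/- The hypersurface {f = 1} is of contact type: for every p with f(p) = 1 and every nonzero v ∈ ℝ⁴ satisfying α_p(v) = 0 and (fderiv ℝ f p)(v) = 0, there exists u ∈ ℝ⁴ with α_p(u) = 0 and (fderiv ℝ f p)(u) = 0 such that ω(v, u) ≠ 0. In other words, ω = dα restricts to a nondegenerate form on the contact hyperplane ξ_p = ker α_p ∩ ker (df)_p at every point of {f = 1}. -/
import Mathlib


noncomputable section

/-- The standard symplectic bilinear form `ω(u,v) = u₁v₂ - u₂v₁ + u₃v₄ - u₄v₃` on ℝ⁴. -/
def ωW (u v : Fin 4 → ℝ) : ℝ :=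
  u 0 * v 1 - u 1 * v 0 + u 2 * v 3 - u 3 * v 2

/-- The function `f(x,y,z,w) = x²/4 + y²/4 + z² - w²/2` from the Weinstein one-handle model. -/
def fW (p : Fin 4 → ℝ) : ℝ :=
  (1 / 4) * p 0 ^ 2 + (1 / 4) * p 1 ^ 2 + p 2 ^ 2 - (1 / 2) * p 3 ^ 2

/-- The 1-form `α = (1/2)x dy - (1/2)y dx + 2z dw + w dz`. -/
def αW (p v : Fin 4 → ℝ) : ℝ :=
  (1 / 2) * p 0 * v 1 - (1 / 2) * p 1 * v 0 + 2 * p 2 * v 3 + p 3 * v 2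

lemma fderiv_fW (p v : Fin 4 → ℝ) :
    fderiv ℝ fW p v
      = (1/2) * p 0 * v 0 + (1/2) * p 1 * v 1 + 2 * p 2 * v 2 - p 3 * v 3 := by
  have h0 : HasFDerivAt (fun q : Fin 4 → ℝ => q 0)
      (ContinuousLinearMap.proj 0 : (Fin 4 → ℝ) →L[ℝ] ℝ) p := hasFDerivAt_apply 0 p
  have h1 : HasFDerivAt (fun q : Fin 4 → ℝ => q 1)
      (ContinuousLinearMap.proj 1 : (Fin 4 → ℝ) →L[ℝ] ℝ) p := hasFDerivAt_apply 1 p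
  have h2 : HasFDerivAt (fun q : Fin 4 → ℝ => q 2)
      (ContinuousLinearMap.proj 2 : (Fin 4 → ℝ) →L[ℝ] ℝ) p := hasFDerivAt_apply 2 p
  have h3 : HasFDerivAt (fun q : Fin 4 → ℝ => q 3)
      (ContinuousLinearMap.proj 3 : (Fin 4 → ℝ) →L[ℝ] ℝ) p := hasFDerivAt_apply 3 p
  set P0 : (Fin 4 → ℝ) →L[ℝ] ℝ := ContinuousLinearMap.proj 0
  set P1 : (Fin 4 → ℝ) →L[ℝ] ℝ := ContinuousLinearMap.proj 1
  set P2 : (Fin 4 → ℝ) →L[ℝ] ℝ := ContinuousLinearMap.proj 2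
  set P3 : (Fin 4 → ℝ) →L[ℝ] ℝ := ContinuousLinearMap.proj 3
  have h : HasFDerivAt (fun q : Fin 4 → ℝ =>
        (1/4) * (q 0 * q 0) + (1/4) * (q 1 * q 1) + q 2 * q 2 - (1/2) * (q 3 * q 3))
      ((((1/4 : ℝ) • (p 0 • P0 + p 0 • P0)
        + (1/4 : ℝ) • (p 1 • P1 + p 1 • P1))
        + (p 2 • P2 + p 2 • P2))
        - (1/2 : ℝ) • (p 3 • P3 + p 3 • P3)) p := by
    exact ((((h0.mul h0).const_mul (1/4 : ℝ)).add
      ((h1.mul h1).const_mul (1/4 : ℝ))).add (h2.mul h2)).sub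
      ((h3.mul h3).const_mul (1/2 : ℝ))
  have hfweq : fW = fun q : Fin 4 → ℝ =>
      (1/4) * (q 0 * q 0) + (1/4) * (q 1 * q 1) + q 2 * q 2 - (1/2) * (q 3 * q 3) := by
    funext q; simp [fW]; ring
  rw [hfweq] at *
  rw [h.fderiv]
  simp [P0, P1, P2, P3, ContinuousLinearMap.proj_apply]
  ring

/-- The hypersurface `{f = 1}` is of contact type: `ω = dα` restricts to a nondegenerate form
on the contact hyperplane `ξ_p = ker α_p ∩ ker (df)_p` at every point of `{f = 1}`. -/
theorem level_set_contact_type (p : Fin 4 → ℝ) (hp : fW p = 1)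
    (v : Fin 4 → ℝ) (hv : v ≠ 0) (hαv : αW p v = 0) (hfv : fderiv ℝ fW p v = 0) :
    ∃ u : Fin 4 → ℝ, αW p u = 0 ∧ fderiv ℝ fW p u = 0 ∧ ωW v u ≠ 0 := by
  have hα : (1/2) * p 0 * v 1 - (1/2) * p 1 * v 0 + 2 * p 2 * v 3 + p 3 * v 2 = 0 := hαv
  have hf : (1/2) * p 0 * v 0 + (1/2) * p 1 * v 1 + 2 * p 2 * v 2 - p 3 * v 3 = 0 := by
    rw [← fderiv_fW p v]; exact hfv
  refine ⟨![-(v 1), v 0, -(v 3), v 2], ?_, ?_, ?_⟩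
  · show (1/2) * p 0 * _ - (1/2) * p 1 * _ + 2 * p 2 * _ + p 3 * _ = 0
    simp only [Matrix.cons_val_zero, Matrix.cons_val_one, Matrix.head_cons,
      Matrix.cons_val_two, Matrix.tail_cons, Matrix.cons_val_three]
    linarith [hf]
  · rw [fderiv_fW]
    simp only [Matrix.cons_val_zero, Matrix.cons_val_one, Matrix.head_cons,
      Matrix.cons_val_two, Matrix.tail_cons, Matrix.cons_val_three]
    linarith [hα]
  · show v 0 * _ - v 1 * _ + v 2 * _ - v 3 * _ ≠ 0
    simp only [Matrix.cons_val_zero, Matrix.cons_val_one, Matrix.head_cons,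
      Matrix.cons_val_two, Matrix.tail_cons, Matrix.cons_val_three]
    have hvsq : v 0 * v 0 - v 1 * -v 1 + v 2 * v 2 - v 3 * -v 3
        = v 0 ^ 2 + v 1 ^ 2 + v 2 ^ 2 + v 3 ^ 2 := by ring
    rw [hvsq]
    intro h
    apply hv
    have key : ∀ i : Fin 4, v i ^ 2 = 0 → v i = 0 := fun i hi => by
      exact pow_eq_zero_iff (two_ne_zero) |>.mp hi
    have h0 : v 0 = 0 := key 0 (le_antisymm (by nlinarith [sq_nonneg (v 1), sq_nonneg (v 2), sq_nonneg (v 3)]) (sq_nonneg _))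
    have h1 : v 1 = 0 := key 1 (le_antisymm (by nlinarith [sq_nonneg (v 0), sq_nonneg (v 2), sq_nonneg (v 3)]) (sq_nonneg _))
    have h2 : v 2 = 0 := key 2 (le_antisymm (by nlinarith [sq_nonneg (v 0), sq_nonneg (v 1), sq_nonneg (v 3)]) (sq_nonneg _))
    have h3 : v 3 = 0 := key 3 (le_antisymm (by nlinarith [sq_nonneg (v 0), sq_nonneg (v 1), sq_nonneg (v 2)]) (sq_nonneg _))
    funext i
    fin_cases i <;> simpa using ‹_›
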